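/- For the truncated normal distribution on [-t, t] with location parameter μ and scale s > 0, the derivative of the expected value with respect to μ equals the variance divided by s², and in particular is positive; hence the expected value is strictly increasing in μ. -/

import Mathlib

open MeasureTheory Real

/-- Gaussian density with mean `μ` and variance `v`. -/
noncomputable def gauss (μ v x : ℝ) : ℝ :=
  (Real.sqrt (2 * Real.pi * v))⁻¹ * Real.exp (-(x - μ)^2 / (2 * v))

/-- Mean of the normal distribution `N(μ, s²)` truncated to `[-t, t]`. -/
noncomputable def truncMean (t s μ : ℝ) : ℝ :=
  (∫ x in Set.Icc (-t) t, x * gauss μ (s^2) x) /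
    (∫ x in Set.Icc (-t) t, gauss μ (s^2) x)

/-- Variance of the normal distribution `N(μ, s²)` truncated to `[-t, t]`. -/
noncomputable def truncVar (t s μ : ℝ) : ℝ :=
  (∫ x in Set.Icc (-t) t, (x - truncMean t s μ)^2 * gauss μ (s^2) x) /
    (∫ x in Set.Icc (-t) t, gauss μ (s^2) x)

lemma gauss_shift (μ v x : ℝ) : gauss μ v x = gauss 0 v (x - μ) := by
  simp [gauss]

lemma gauss_cont (μ v : ℝ) : Continuous (gauss μ v) := by
  unfold gauss
  exact continuous_const.mul
    ((((continuous_id.sub continuous_const).pow 2).neg.div_const _).rexp)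

lemma gauss_pos {v : ℝ} (hv : 0 < v) (μ x : ℝ) : 0 < gauss μ v x := by
  have h2 : 0 < 2 * Real.pi * v := by positivity
  exact mul_pos (inv_pos.2 (Real.sqrt_pos.2 h2)) (Real.exp_pos _)

lemma gauss_deriv {v : ℝ} (hv : 0 < v) (y : ℝ) :
    HasDerivAt (gauss 0 v) (-(y / v) * gauss 0 v y) y := by
  have h1 : HasDerivAt (fun y : ℝ => -(y - 0)^2 / (2*v)) (-(y/v)) y := by
    have h0 := (((hasDerivAt_id y).sub_const 0).pow 2).neg.div_const (2*v)
    refine h0.congr_deriv ?_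
    simp only [id_eq]
    field_simp
    ring
  have h2 := (h1.exp).const_mul ((Real.sqrt (2 * Real.pi * v))⁻¹)
  refine h2.congr_deriv ?_
  unfold gauss
  ring

lemma icc_int (f : ℝ → ℝ) {t : ℝ} (ht : 0 < t) :
    ∫ x in Set.Icc (-t) t, f x = ∫ x in (-t)..t, f x := by
  rw [intervalIntegral.integral_of_le (by linarith), integral_Icc_eq_integral_Ioc]

lemma D_repr (t s μ : ℝ) (ht : 0 < t) :
    ∫ x in Set.Icc (-t) t, gauss μ (s^2) x
      = ∫ u in (-t-μ)..(t-μ), gauss 0 (s^2) u := by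
  rw [icc_int _ ht,
    ← intervalIntegral.integral_comp_sub_right (fun u => gauss 0 (s^2) u) μ]
  exact intervalIntegral.integral_congr fun x _ => gauss_shift μ (s^2) x

lemma N_repr (t s μ : ℝ) (ht : 0 < t) :
    ∫ x in Set.Icc (-t) t, x * gauss μ (s^2) x
      = ∫ u in (-t-μ)..(t-μ), (u + μ) * gauss 0 (s^2) u := by
  rw [icc_int _ ht,
    ← intervalIntegral.integral_comp_sub_right (fun u => (u + μ) * gauss 0 (s^2) u) μ]
  refine intervalIntegral.integral_congr fun x _ => ?_
  rw [gauss_shift μ (s^2) x]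
  ring_nf

lemma V_repr (t s μ m : ℝ) (ht : 0 < t) :
    ∫ x in Set.Icc (-t) t, (x - m)^2 * gauss μ (s^2) x
      = ∫ u in (-t-μ)..(t-μ), (u + (μ - m))^2 * gauss 0 (s^2) u := by
  rw [icc_int _ ht,
    ← intervalIntegral.integral_comp_sub_right (fun u => (u + (μ - m))^2 * gauss 0 (s^2) u) μ]
  refine intervalIntegral.integral_congr fun x _ => ?_
  rw [gauss_shift μ (s^2) x]
  ring_nf

lemma E1_val {v : ℝ} (hv : 0 < v) (a b : ℝ) :
    ∫ u in a..b, u * gauss 0 v u = v * gauss 0 v a - v * gauss 0 v b := by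
  have hd : ∀ y ∈ Set.uIcc a b,
      HasDerivAt (fun y => -(v * gauss 0 v y)) (y * gauss 0 v y) y := by
    intro y _
    have h := ((gauss_deriv hv y).const_mul v).neg
    refine h.congr_deriv ?_
    field_simp
  rw [intervalIntegral.integral_eq_sub_of_hasDerivAt hd
    ((continuous_id.mul (gauss_cont 0 v)).intervalIntegrable _ _)]
  ring

lemma E2_val {v : ℝ} (hv : 0 < v) (a b : ℝ) :
    ∫ u in a..b, u^2 * gauss 0 v u
      = v * (∫ u in a..b, gauss 0 v u)
        - v * (b * gauss 0 v b - a * gauss 0 v a) := by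
  have hd : ∀ y ∈ Set.uIcc a b,
      HasDerivAt (fun y => v * (∫ x in a..y, gauss 0 v x) - v * (y * gauss 0 v y))
        (y^2 * gauss 0 v y) y := by
    intro y _
    have h1 := (((gauss_cont 0 v).integral_hasStrictDerivAt a y).hasDerivAt).const_mul v
    have h2 := (((hasDerivAt_id y).mul (gauss_deriv hv y)).const_mul v)
    have h3 := h1.sub h2
    refine h3.congr_deriv ?_
    simp only [id_eq]
    field_simp
    ring
  rw [intervalIntegral.integral_eq_sub_of_hasDerivAt hd
    (((continuous_id.pow 2).mul (gauss_cont 0 v)).intervalIntegrable _ _)]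
  rw [intervalIntegral.integral_same]
  ring

lemma D_pos (t s μ : ℝ) (ht : 0 < t) (hs : 0 < s) :
    0 < ∫ x in Set.Icc (-t) t, gauss μ (s^2) x := by
  rw [icc_int _ ht]
  exact intervalIntegral.intervalIntegral_pos_of_pos
    ((gauss_cont μ (s^2)).intervalIntegrable _ _)
    (fun x => gauss_pos (by positivity) _ _) (by linarith)

lemma V_pos (t s μ m : ℝ) (ht : 0 < t) (hs : 0 < s) :
    0 < ∫ x in Set.Icc (-t) t, (x - m)^2 * gauss μ (s^2) x := by
  have hv : (0:ℝ) < s^2 := by positivity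
  have hcont : Continuous fun x => (x - m)^2 * gauss μ (s^2) x :=
    ((continuous_id.sub continuous_const).pow 2).mul (gauss_cont μ (s^2))
  rw [MeasureTheory.setIntegral_pos_iff_support_of_nonneg_ae
    (ae_of_all _ fun x => mul_nonneg (sq_nonneg _) (gauss_pos hv μ x).le)
    (hcont.integrableOn_Icc)]
  have hsub : Set.Icc (-t) t \ {m}
      ⊆ Function.support (fun x => (x - m)^2 * gauss μ (s^2) x) ∩ Set.Icc (-t) t := by
    intro x hx
    refine ⟨?_, hx.1⟩
    have hxm : x ≠ m := hx.2
    exact mul_ne_zero (pow_ne_zero _ (sub_ne_zero.mpr hxm)) (gauss_pos hv μ x).ne'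
  refine lt_of_lt_of_le ?_ (measure_mono hsub)
  rw [measure_diff_null (measure_singleton m), Real.volume_Icc]
  rw [ENNReal.ofReal_pos]
  linarith

lemma V_val (t s μ m : ℝ) (ht : 0 < t) (hs : 0 < s) :
    ∫ x in Set.Icc (-t) t, (x - m)^2 * gauss μ (s^2) x
      = ((s^2) * (∫ u in (-t-μ)..(t-μ), gauss 0 (s^2) u)
          - (s^2) * ((t-μ) * gauss 0 (s^2) (t-μ) - (-t-μ) * gauss 0 (s^2) (-t-μ)))
        + (2*(μ - m)) * ((s^2) * gauss 0 (s^2) (-t-μ) - (s^2) * gauss 0 (s^2) (t-μ))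
        + (μ - m)^2 * (∫ u in (-t-μ)..(t-μ), gauss 0 (s^2) u) := by
  have hv : (0:ℝ) < s^2 := by positivity
  rw [V_repr t s μ m ht]
  have expand : ∀ u : ℝ, (u + (μ - m))^2 * gauss 0 (s^2) u
      = u^2 * gauss 0 (s^2) u + (2*(μ-m)) * (u * gauss 0 (s^2) u)
        + (μ-m)^2 * gauss 0 (s^2) u := fun u => by ring
  simp only [expand]
  have hi1 : IntervalIntegrable (fun u : ℝ => u^2 * gauss 0 (s^2) u) volume (-t-μ) (t-μ) :=
    ((continuous_id.pow 2).mul (gauss_cont 0 (s^2))).intervalIntegrable _ _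
  have hi2 : IntervalIntegrable (fun u : ℝ => (2*(μ-m)) * (u * gauss 0 (s^2) u))
      volume (-t-μ) (t-μ) :=
    (continuous_const.mul (continuous_id.mul (gauss_cont 0 (s^2)))).intervalIntegrable _ _
  have hi3 : IntervalIntegrable (fun u : ℝ => (μ-m)^2 * gauss 0 (s^2) u)
      volume (-t-μ) (t-μ) :=
    (continuous_const.mul (gauss_cont 0 (s^2))).intervalIntegrable _ _
  rw [intervalIntegral.integral_add (hi1.add hi2) hi3,
    intervalIntegral.integral_add hi1 hi2,
    intervalIntegral.integral_const_mul, intervalIntegral.integral_const_mul,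
    E2_val hv, E1_val hv]

lemma master (t s : ℝ) (ht : 0 < t) (hs : 0 < s) (μ₀ : ℝ) :
    HasDerivAt (truncMean t s) (truncVar t s μ₀ / s^2) μ₀ := by
  have hv : (0:ℝ) < s^2 := by positivity
  set v := s^2 with hvdef
  set φ : ℝ → ℝ := gauss 0 v with hφdef
  have hφc : Continuous φ := gauss_cont 0 v
  set D : ℝ → ℝ := fun μ => ∫ x in Set.Icc (-t) t, gauss μ v x with hDdef
  set N : ℝ → ℝ := fun μ => ∫ x in Set.Icc (-t) t, x * gauss μ v x with hNdef
  have hDpos : ∀ μ, 0 < D μ := fun μ => D_pos t s μ ht hs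
  set F : ℝ → ℝ := fun y => ∫ x in (0:ℝ)..y, φ x with hFdef
  set Ψ : ℝ → ℝ := fun y => ∫ x in (0:ℝ)..y, x * φ x with hΨdef
  have hsplit : ∀ (g : ℝ → ℝ), Continuous g → ∀ a b : ℝ,
      ∫ x in a..b, g x = (∫ x in (0:ℝ)..b, g x) - ∫ x in (0:ℝ)..a, g x :=
    fun g hg a b => (intervalIntegral.integral_interval_sub_left
      (hg.intervalIntegrable _ _) (hg.intervalIntegrable _ _)).symm
  have hDrep : ∀ μ : ℝ, D μ = F (t - μ) - F (-t - μ) := by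
    intro μ
    rw [hDdef]
    simp only
    rw [D_repr t s μ ht, hsplit _ hφc]
  have hNrep : ∀ μ : ℝ, N μ = (Ψ (t - μ) - Ψ (-t - μ)) + μ * (F (t - μ) - F (-t - μ)) := by
    intro μ
    rw [hNdef]
    simp only
    rw [N_repr t s μ ht]
    have expand : ∀ u : ℝ, (u + μ) * gauss 0 v u = u * φ u + μ * φ u := fun u => by
      rw [hφdef]; ring
    simp only [← hvdef, expand]
    have hiA : IntervalIntegrable (fun u : ℝ => u * φ u) volume (-t-μ) (t-μ) :=
      (continuous_id.mul hφc).intervalIntegrable _ _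
    have hiB : IntervalIntegrable (fun u : ℝ => μ * φ u) volume (-t-μ) (t-μ) :=
      (continuous_const.mul hφc).intervalIntegrable _ _
    have hcA : Continuous (fun u : ℝ => u * φ u) := continuous_id.mul hφc
    rw [intervalIntegral.integral_add hiA hiB,
      intervalIntegral.integral_const_mul,
      hsplit _ hcA, hsplit _ hφc]
  -- derivatives
  have hFd : ∀ y, HasDerivAt F (φ y) y :=
    fun y => (hφc.integral_hasStrictDerivAt 0 y).hasDerivAt
  have hΨd : ∀ y, HasDerivAt Ψ (y * φ y) y :=
    fun y => ((continuous_id.mul hφc).integral_hasStrictDerivAt 0 y).hasDerivAt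
  have hsub1 : HasDerivAt (fun μ : ℝ => t - μ) (-1) μ₀ := by
    simpa using (hasDerivAt_id μ₀).const_sub t
  have hsub2 : HasDerivAt (fun μ : ℝ => -t - μ) (-1) μ₀ := by
    simpa using (hasDerivAt_id μ₀).const_sub (-t)
  have hF1 : HasDerivAt (fun μ : ℝ => F (t - μ)) (φ (t - μ₀) * (-1)) μ₀ :=
    (hFd (t - μ₀)).comp μ₀ hsub1
  have hF2 : HasDerivAt (fun μ : ℝ => F (-t - μ)) (φ (-t - μ₀) * (-1)) μ₀ :=
    (hFd (-t - μ₀)).comp μ₀ hsub2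
  have hΨ1 : HasDerivAt (fun μ : ℝ => Ψ (t - μ)) (((t - μ₀) * φ (t - μ₀)) * (-1)) μ₀ :=
    (hΨd (t - μ₀)).comp μ₀ hsub1
  have hΨ2 : HasDerivAt (fun μ : ℝ => Ψ (-t - μ)) (((-t - μ₀) * φ (-t - μ₀)) * (-1)) μ₀ :=
    (hΨd (-t - μ₀)).comp μ₀ hsub2
  have hDd : HasDerivAt D (φ (-t - μ₀) - φ (t - μ₀)) μ₀ := by
    have h := hF1.sub hF2
    have h2 : HasDerivAt D (φ (t - μ₀) * (-1) - φ (-t - μ₀) * (-1)) μ₀ :=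
      h.congr_of_eventuallyEq (Filter.Eventually.of_forall hDrep)
    refine h2.congr_deriv ?_
    ring
  have hNd : HasDerivAt N
      ((-t - μ₀) * φ (-t - μ₀) - (t - μ₀) * φ (t - μ₀) + D μ₀
        + μ₀ * (φ (-t - μ₀) - φ (t - μ₀))) μ₀ := by
    have h := (hΨ1.sub hΨ2).add ((hasDerivAt_id μ₀).mul (hF1.sub hF2))
    have h2 := h.congr_of_eventuallyEq (Filter.Eventually.of_forall hNrep)
    refine h2.congr_deriv ?_
    rw [hDrep μ₀]
    simp only [id_eq, Pi.sub_apply]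
    ring
  have hquot := hNd.div hDd (hDpos μ₀).ne'
  have hTM : truncMean t s = fun μ => N μ / D μ := rfl
  rw [hTM]
  refine hquot.congr_deriv ?_
  -- now the value equality
  have hE1 : Ψ (t - μ₀) - Ψ (-t - μ₀) = v * φ (-t - μ₀) - v * φ (t - μ₀) := by
    have hcA : Continuous (fun u : ℝ => u * φ u) := continuous_id.mul hφc
    simp only [hΨdef, hφdef]
    rw [← hsplit (fun u => u * gauss 0 v u) (by simpa [hφdef] using hcA) (-t - μ₀) (t - μ₀)]
    exact E1_val hv _ _
  have hNval : N μ₀ = v * φ (-t - μ₀) - v * φ (t - μ₀) + μ₀ * D μ₀ := by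
    rw [hNrep μ₀, hE1, hDrep μ₀]
  have hTV : truncVar t s μ₀
      = (∫ x in Set.Icc (-t) t, (x - N μ₀ / D μ₀)^2 * gauss μ₀ v x) / D μ₀ := rfl
  have hE0 : (∫ u in (-t-μ₀)..(t-μ₀), gauss 0 v u) = D μ₀ := (D_repr t s μ₀ ht).symm
  rw [hTV, V_val t s μ₀ (N μ₀ / D μ₀) ht hs, hE0]
  rw [hNval]
  have hD0 : D μ₀ ≠ 0 := (hDpos μ₀).ne'
  field_simp
  ring

theorem stmt_1 (t s : ℝ) (ht : 0 < t) (hs : 0 < s) :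
    (∀ μ : ℝ, HasDerivAt (truncMean t s) (truncVar t s μ / s^2) μ ∧
      0 < truncVar t s μ / s^2) ∧
    StrictMono (truncMean t s) := by
  have h1 : ∀ μ, HasDerivAt (truncMean t s) (truncVar t s μ / s^2) μ :=
    master t s ht hs
  have h2 : ∀ μ, 0 < truncVar t s μ / s^2 := by
    intro μ
    have hVpos := V_pos t s μ (truncMean t s μ) ht hs
    have hDpos := D_pos t s μ ht hs
    have hTV : 0 < truncVar t s μ := div_pos hVpos hDpos
    positivity
  exact ⟨fun μ => ⟨h1 μ, h2 μ⟩,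
    strictMono_of_deriv_pos fun μ => by rw [(h1 μ).deriv]; exact h2 μ⟩
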